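/- For $p = \kappa(\Lambda) p_0$ on the forward light cone, the subspace $(\Phi_e(\Lambda) \otimes \Phi_e(\Lambda)) R_g \leq \mathbb{C}^4 \otimes \mathbb{C}^4 \cong M_4(\mathbb{C})$, where $R_g$ is spanned by $p_0 \otimes p_0$, $p_0 \otimes \epsilon_\pm + \epsilon_\pm \otimes p_0$, and $\epsilon_\pm \otimes \epsilon_\pm$, equals the 5-dimensional space $\{ M \in M_4(\mathbb{C}) : M^{\mu\nu} = M^{\nu\mu},\ p_\mu M^{\mu\nu} = 0 \text{ for all } \nu,\ M^\mu_{\ \mu} = 0 \}$ of symmetric, transverse, traceless complex 2-tensors. -/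

import Mathlib

/-! STATEMENT 14: For `p = κ(Λ)p₀` on the forward light cone, the image
`(Φ_e(Λ)⊗Φ_e(Λ))R_g`, with `R_g` spanned by `p₀⊗p₀`, `p₀⊗ε± + ε±⊗p₀` and
`ε±⊗ε±`, equals the 5-dimensional space of symmetric, transverse, traceless
complex 2-tensors `{M : M^{μν}=M^{νμ}, p_μ M^{μν} = 0, M^μ_μ = 0}`.
Tensors in `ℂ⁴ ⊗ ℂ⁴` are realized as `4×4` matrices with
`(v⊗w)^{μν} = v^μ w^ν`. -/

open Matrix Complex

noncomputable section

def tildeC (x : Fin 4 → ℂ) : Matrix (Fin 2) (Fin 2) ℂ :=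
  !![x 0 + x 3, x 1 - Complex.I * x 2; x 1 + Complex.I * x 2, x 0 - x 3]

def untildeC (M : Matrix (Fin 2) (Fin 2) ℂ) : Fin 4 → ℂ :=
  ![(M 0 0 + M 1 1) / 2, (M 1 0 + M 0 1) / 2,
    (M 1 0 - M 0 1) / (2 * Complex.I), (M 0 0 - M 1 1) / 2]

def PhiM (A : Matrix (Fin 2) (Fin 2) ℂ) (x : Fin 4 → ℂ) : Fin 4 → ℂ :=
  untildeC (A * tildeC x * Aᴴ)

def kappaM (A : Matrix (Fin 2) (Fin 2) ℂ) (x : Fin 4 → ℝ) : Fin 4 → ℝ :=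
  fun i => (PhiM A (fun j => (x j : ℂ)) i).re

def epsP : Fin 4 → ℂ := ![0, 1 / (Real.sqrt 2 : ℂ), Complex.I / (Real.sqrt 2 : ℂ), 0]
def epsM : Fin 4 → ℂ := ![0, 1 / (Real.sqrt 2 : ℂ), -Complex.I / (Real.sqrt 2 : ℂ), 0]
def p0C : Fin 4 → ℂ := ![1, 0, 0, 1]
def p0R : Fin 4 → ℝ := ![1, 0, 0, 1]

/-! ### Auxiliary lemmas -/

set_option maxHeartbeats 2000000

lemma untildeC_tildeC (x : Fin 4 → ℂ) : untildeC (tildeC x) = x := by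
  funext i
  fin_cases i <;> simp [untildeC, tildeC] <;> field_simp <;> try ring

lemma tildeC_untildeC (M : Matrix (Fin 2) (Fin 2) ℂ) : tildeC (untildeC M) = M := by
  ext i j
  fin_cases i <;> fin_cases j <;> simp [untildeC, tildeC] <;> field_simp <;> try ring

lemma tildeC_add (x y : Fin 4 → ℂ) : tildeC (x + y) = tildeC x + tildeC y := by
  ext i j
  fin_cases i <;> fin_cases j <;> simp [tildeC] <;> try ring

lemma tildeC_smul (c : ℂ) (x : Fin 4 → ℂ) : tildeC (c • x) = c • tildeC x := by
  ext i j
  fin_cases i <;> fin_cases j <;> simp [tildeC] <;> try ring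

lemma untildeC_add (M N : Matrix (Fin 2) (Fin 2) ℂ) :
    untildeC (M + N) = untildeC M + untildeC N := by
  funext i
  fin_cases i <;> simp [untildeC] <;> try ring

lemma untildeC_smul (c : ℂ) (M : Matrix (Fin 2) (Fin 2) ℂ) :
    untildeC (c • M) = c • untildeC M := by
  funext i
  fin_cases i <;> simp [untildeC] <;> try ring

lemma PhiM_add (A : Matrix (Fin 2) (Fin 2) ℂ) (x y : Fin 4 → ℂ) :
    PhiM A (x + y) = PhiM A x + PhiM A y := by
  unfold PhiM
  rw [tildeC_add, Matrix.mul_add, Matrix.add_mul, untildeC_add]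

lemma PhiM_smul (A : Matrix (Fin 2) (Fin 2) ℂ) (c : ℂ) (x : Fin 4 → ℂ) :
    PhiM A (c • x) = c • PhiM A x := by
  unfold PhiM
  rw [tildeC_smul, Matrix.mul_smul, Matrix.smul_mul, untildeC_smul]

lemma PhiM_comp (A B : Matrix (Fin 2) (Fin 2) ℂ) (x : Fin 4 → ℂ) :
    PhiM A (PhiM B x) = PhiM (A * B) x := by
  unfold PhiM
  rw [tildeC_untildeC, Matrix.conjTranspose_mul]
  congr 1
  noncomm_ring

lemma PhiM_one (x : Fin 4 → ℂ) : PhiM 1 x = x := by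
  unfold PhiM
  simp [untildeC_tildeC]

def Bf (x y : Fin 4 → ℂ) : ℂ := x 0 * y 0 - x 1 * y 1 - x 2 * y 2 - x 3 * y 3

lemma det_tildeC (x : Fin 4 → ℂ) : (tildeC x).det = Bf x x := by
  simp [tildeC, Matrix.det_fin_two, Bf]
  ring_nf
  simp [Complex.I_sq]
  ring

lemma Bf_quad (A : Matrix (Fin 2) (Fin 2) ℂ) (hA : A.det = 1) (x : Fin 4 → ℂ) :
    Bf (PhiM A x) (PhiM A x) = Bf x x := by
  calc Bf (PhiM A x) (PhiM A x) = (tildeC (PhiM A x)).det := (det_tildeC _).symm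
    _ = (A * tildeC x * Aᴴ).det := by rw [PhiM, tildeC_untildeC]
    _ = A.det * (tildeC x).det * star A.det := by
        rw [Matrix.det_mul, Matrix.det_mul, Matrix.det_conjTranspose]
    _ = Bf x x := by rw [hA, det_tildeC]; simp

lemma Bf_inv (A : Matrix (Fin 2) (Fin 2) ℂ) (hA : A.det = 1) (x y : Fin 4 → ℂ) :
    Bf (PhiM A x) (PhiM A y) = Bf x y := by
  have h1 := Bf_quad A hA (x + y)
  have h2 := Bf_quad A hA x
  have h3 := Bf_quad A hA y
  rw [PhiM_add] at h1
  simp only [Bf, Pi.add_apply] at h1 h2 h3 ⊢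
  linear_combination (h1 - h2 - h3) / 2

def phiLM (A : Matrix (Fin 2) (Fin 2) ℂ) : (Fin 4 → ℂ) →ₗ[ℂ] (Fin 4 → ℂ) where
  toFun := PhiM A
  map_add' := PhiM_add A
  map_smul' := PhiM_smul A

def Lmat (A : Matrix (Fin 2) (Fin 2) ℂ) : Matrix (Fin 4) (Fin 4) ℂ :=
  LinearMap.toMatrix' (phiLM A)

lemma Lmat_mulVec (A : Matrix (Fin 2) (Fin 2) ℂ) (x : Fin 4 → ℂ) :
    Lmat A *ᵥ x = PhiM A x := by
  rw [← Matrix.toLin'_apply, Lmat, Matrix.toLin'_toMatrix']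
  rfl

lemma Lmat_mul (A : Matrix (Fin 2) (Fin 2) ℂ) (hA : IsUnit A.det) :
    Lmat A * Lmat A⁻¹ = 1 ∧ Lmat A⁻¹ * Lmat A = 1 := by
  have h1 : phiLM A ∘ₗ phiLM A⁻¹ = LinearMap.id := by
    apply LinearMap.ext; intro x
    show PhiM A (PhiM A⁻¹ x) = x
    rw [PhiM_comp, Matrix.mul_nonsing_inv A hA, PhiM_one]
  have h2 : phiLM A⁻¹ ∘ₗ phiLM A = LinearMap.id := by
    apply LinearMap.ext; intro x
    show PhiM A⁻¹ (PhiM A x) = x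
    rw [PhiM_comp, Matrix.nonsing_inv_mul A hA, PhiM_one]
  constructor
  · rw [Lmat, Lmat, ← LinearMap.toMatrix'_comp, h1, LinearMap.toMatrix'_id]
  · rw [Lmat, Lmat, ← LinearMap.toMatrix'_comp, h2, LinearMap.toMatrix'_id]

lemma mul_vecMulVec_mul (L : Matrix (Fin 4) (Fin 4) ℂ) (v w : Fin 4 → ℂ) :
    L * vecMulVec v w * Lᵀ = vecMulVec (L *ᵥ v) (L *ᵥ w) := by
  ext i j
  simp [Matrix.mul_apply, vecMulVec_apply, mulVec, dotProduct, Fin.sum_univ_four,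
    Finset.mul_sum, Finset.sum_mul]
  ring

def etaM : Matrix (Fin 4) (Fin 4) ℂ := diagonal ![1,-1,-1,-1]

lemma single_eta (μ ν : Fin 4) : Bf (Pi.single μ 1) (Pi.single ν 1) = etaM μ ν := by
  fin_cases μ <;> fin_cases ν <;>
    simp (config := { decide := true }) [Bf, etaM, Matrix.diagonal_apply, Pi.single_apply,
      Fin.ext_iff]

lemma eta_inv (A : Matrix (Fin 2) (Fin 2) ℂ) (hA : A.det = 1) :
    (Lmat A)ᵀ * etaM * (Lmat A) = etaM := by
  ext μ ν
  have hcol : ∀ (j : Fin 4), (fun i => Lmat A i j) = PhiM A (Pi.single j 1) := by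
    intro j; funext i; rw [← Lmat_mulVec]
    simp [Matrix.mulVec_single]
  calc ((Lmat A)ᵀ * etaM * (Lmat A)) μ ν
      = Bf (fun i => Lmat A i μ) (fun i => Lmat A i ν) := by
        simp [Bf, Matrix.mul_apply, etaM, Fin.sum_univ_four, Matrix.diagonal_apply]
        ring
    _ = Bf (Pi.single μ 1) (Pi.single ν 1) := by rw [hcol, hcol, Bf_inv A hA]
    _ = etaM μ ν := single_eta μ ν

lemma p0R_cast : (fun j => ((p0R j : ℝ) : ℂ)) = p0C := by
  funext j; fin_cases j <;> simp [p0R, p0C]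

lemma kappa_real (A : Matrix (Fin 2) (Fin 2) ℂ) (i : Fin 4) :
    ((kappaM A p0R i : ℝ) : ℂ) = PhiM A p0C i := by
  rw [kappaM, p0R_cast]
  have hT : (tildeC p0C)ᴴ = tildeC p0C := by
    ext i j; fin_cases i <;> fin_cases j <;>
      simp [tildeC, p0C, Matrix.conjTranspose_apply]
  have hH : (A * tildeC p0C * Aᴴ)ᴴ = A * tildeC p0C * Aᴴ := by
    rw [Matrix.conjTranspose_mul, Matrix.conjTranspose_mul, Matrix.conjTranspose_conjTranspose,
      hT, Matrix.mul_assoc]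
  have hent : ∀ a b : Fin 2, (starRingEnd ℂ) ((A * tildeC p0C * Aᴴ) a b)
      = (A * tildeC p0C * Aᴴ) b a := by
    intro a b
    conv_rhs => rw [← hH]
    simp [Matrix.conjTranspose_apply]
  have : (starRingEnd ℂ) (PhiM A p0C i) = PhiM A p0C i := by
    fin_cases i <;>
      · simp [PhiM, untildeC, map_add, map_sub, map_div₀, Complex.conj_I, hent,
          Complex.conj_ofNat]
        try ring
  rw [Complex.conj_eq_iff_re] at this
  exact this

lemma sqrt2_sq : ((Real.sqrt 2 : ℝ) : ℂ) * ((Real.sqrt 2 : ℝ) : ℂ) = 2 := by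
  norm_cast; exact Real.mul_self_sqrt (by norm_num)

lemma sqrt2_ne : ((Real.sqrt 2 : ℝ) : ℂ) ≠ 0 := by norm_cast; positivity

lemma Bf_p0_p0 : Bf p0C p0C = 0 := by simp [Bf, p0C]
lemma Bf_p0_epsP : Bf p0C epsP = 0 := by simp [Bf, p0C, epsP]
lemma Bf_p0_epsM : Bf p0C epsM = 0 := by simp [Bf, p0C, epsM]

lemma Bf_epsP_epsP : Bf epsP epsP = 0 := by
  have h1 : epsP 1 = 1 / (Real.sqrt 2 : ℂ) := rfl
  have h2 : epsP 2 = Complex.I / (Real.sqrt 2 : ℂ) := rfl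
  have h0 : epsP 0 = 0 := rfl
  have h3 : epsP 3 = 0 := rfl
  rw [Bf, h0, h1, h2, h3, div_mul_div_comm, div_mul_div_comm, sqrt2_sq, Complex.I_mul_I]
  norm_num

lemma Bf_epsM_epsM : Bf epsM epsM = 0 := by
  have h1 : epsM 1 = 1 / (Real.sqrt 2 : ℂ) := rfl
  have h2 : epsM 2 = -Complex.I / (Real.sqrt 2 : ℂ) := rfl
  have h0 : epsM 0 = 0 := rfl
  have h3 : epsM 3 = 0 := rfl
  rw [Bf, h0, h1, h2, h3, div_mul_div_comm, div_mul_div_comm, sqrt2_sq]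
  rw [neg_mul_neg, Complex.I_mul_I]
  norm_num

lemma base_decomp (N : Matrix (Fin 4) (Fin 4) ℂ)
    (hsym : Nᵀ = N)
    (ht : ∀ ν : Fin 4, N 0 ν = N 3 ν)
    (htr : N 0 0 - N 1 1 - N 2 2 - N 3 3 = 0) :
    N = N 0 0 • vecMulVec p0C p0C
      + ((Real.sqrt 2 : ℂ) * (N 0 1 - Complex.I * N 0 2) / 2) •
          (vecMulVec p0C epsP + vecMulVec epsP p0C)
      + ((Real.sqrt 2 : ℂ) * (N 0 1 + Complex.I * N 0 2) / 2) •
          (vecMulVec p0C epsM + vecMulVec epsM p0C)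
      + (N 1 1 - Complex.I * N 1 2) • vecMulVec epsP epsP
      + (N 1 1 + Complex.I * N 1 2) • vecMulVec epsM epsM := by
  have hs : ∀ i j, N j i = N i j := fun i j => congrFun (congrFun hsym i) j
  have h30 : N 3 0 = N 0 0 := (ht 0).symm
  have h31 : N 3 1 = N 0 1 := (ht 1).symm
  have h32 : N 3 2 = N 0 2 := (ht 2).symm
  have h03 : N 0 3 = N 0 0 := (hs 3 0).trans h30
  have h33 : N 3 3 = N 0 0 := by rw [← ht 3]; exact h03
  have h10 : N 1 0 = N 0 1 := hs 0 1
  have h20 : N 2 0 = N 0 2 := hs 0 2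
  have h21 : N 2 1 = N 1 2 := hs 1 2
  have h13 : N 1 3 = N 0 1 := by rw [hs 3 1]; exact h31
  have h23 : N 2 3 = N 0 2 := by rw [hs 3 2]; exact h32
  have h22 : N 2 2 = -(N 1 1) := by linear_combination -htr - h33
  have hs2 := sqrt2_sq
  have hne := sqrt2_ne
  have e0 : (⟨0, by norm_num⟩ : Fin 4) = 0 := rfl
  have e1 : (⟨1, by norm_num⟩ : Fin 4) = 1 := rfl
  have e2 : (⟨2, by norm_num⟩ : Fin 4) = 2 := rfl
  have e3 : (⟨3, by norm_num⟩ : Fin 4) = 3 := rfl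
  ext i j
  fin_cases i <;> fin_cases j <;>
    simp only [e0, e1, e2, e3, Matrix.add_apply, Matrix.smul_apply, Matrix.vecMulVec_apply,
      smul_eq_mul, p0C, epsP, epsM, Matrix.cons_val_zero, Matrix.cons_val_one, Matrix.head_cons,
      Matrix.cons_val_two, Matrix.cons_val_three, Matrix.tail_cons,
      h30, h31, h32, h03, h33, h10, h20, h21, h13, h23, h22] <;>
    field_simp <;>
    first
      | ring1
      | linear_combination (N 0 2 * ((Real.sqrt 2 : ℝ) : ℂ) * 2) * Complex.I_sq
      | linear_combination N 1 1 * hs2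
      | linear_combination (-(N 1 1)) * hs2
      | linear_combination N 1 2 * hs2 + 2 * N 1 2 * Complex.I_sq
      | linear_combination (-(N 1 2)) * hs2 - 2 * N 1 2 * Complex.I_sq
      | linear_combination 2 * N 1 2 * hs2 + 4 * N 1 2 * Complex.I_sq
      | linear_combination (-2 * N 1 2) * hs2 - 4 * N 1 2 * Complex.I_sq
      | linear_combination (2 * N 0 2 * ((Real.sqrt 2 : ℝ) : ℂ)) * Complex.I_sq
      | linear_combination (-(N 0 2) * ((Real.sqrt 2 : ℝ) : ℂ) * 2) * Complex.I_sq
      | linear_combination 2 * N 1 1 * hs2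
      | linear_combination (-2 * N 1 1) * hs2
      | linear_combination (-4 * N 1 1) * Complex.I_sq
      | linear_combination (-2 * N 1 1) * hs2 + (-8 * N 1 1) * Complex.I_sq
      | linear_combination (4 * N 1 1) * Complex.I_sq
      | (rw [← sq] at hs2; simp only [hs2, Complex.I_sq]; ring1)

lemma vecMul_etaM (v : Fin 4 → ℂ) :
    v ᵥ* etaM = ![v 0, -(v 1), -(v 2), -(v 3)] := by
  funext j
  fin_cases j <;>
    simp (config := { decide := true }) [Matrix.vecMul, dotProduct,
      Fin.sum_univ_four, etaM, Matrix.diagonal_apply]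

lemma vec4_vecMul (a b c d : ℂ) (X : Matrix (Fin 4) (Fin 4) ℂ) (ν : Fin 4) :
    ((![a, b, c, d] : Fin 4 → ℂ) ᵥ* X) ν
      = a * X 0 ν + b * X 1 ν + c * X 2 ν + d * X 3 ν := by
  simp [Matrix.vecMul, dotProduct, Fin.sum_univ_four]

lemma trace_etaM (X : Matrix (Fin 4) (Fin 4) ℂ) :
    (etaM * X).trace = X 0 0 - X 1 1 - X 2 2 - X 3 3 := by
  simp (config := { decide := true }) [Matrix.trace, Matrix.diag, Matrix.mul_apply,
    Fin.sum_univ_four, etaM, Matrix.diagonal_apply]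
  ring

theorem graviton_potential_fiber (A : Matrix (Fin 2) (Fin 2) ℂ)
    (hA : A.det = 1) :
    (Submodule.span ℂ
        ({vecMulVec (PhiM A p0C) (PhiM A p0C),
          vecMulVec (PhiM A p0C) (PhiM A epsP) + vecMulVec (PhiM A epsP) (PhiM A p0C),
          vecMulVec (PhiM A p0C) (PhiM A epsM) + vecMulVec (PhiM A epsM) (PhiM A p0C),
          vecMulVec (PhiM A epsP) (PhiM A epsP),
          vecMulVec (PhiM A epsM) (PhiM A epsM)} :
          Set (Matrix (Fin 4) (Fin 4) ℂ)) : Set (Matrix (Fin 4) (Fin 4) ℂ)) =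
      {M : Matrix (Fin 4) (Fin 4) ℂ |
        Mᵀ = M ∧
        (∀ ν : Fin 4,
          ((kappaM A p0R 0 : ℝ) : ℂ) * M 0 ν - ((kappaM A p0R 1 : ℝ) : ℂ) * M 1 ν -
            ((kappaM A p0R 2 : ℝ) : ℂ) * M 2 ν - ((kappaM A p0R 3 : ℝ) : ℂ) * M 3 ν = 0) ∧
        M 0 0 - M 1 1 - M 2 2 - M 3 3 = 0} := by
  classical
  ext M
  simp only [SetLike.mem_coe, Set.mem_setOf_eq, kappa_real A]
  set q : Fin 4 → ℂ := PhiM A p0C with hqdef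
  set ep : Fin 4 → ℂ := PhiM A epsP with hepdef
  set em : Fin 4 → ℂ := PhiM A epsM with hemdef
  have hqq : Bf q q = 0 := by rw [hqdef, Bf_inv A hA]; exact Bf_p0_p0
  have hqep : Bf q ep = 0 := by rw [hqdef, hepdef, Bf_inv A hA]; exact Bf_p0_epsP
  have hqem : Bf q em = 0 := by rw [hqdef, hemdef, Bf_inv A hA]; exact Bf_p0_epsM
  have hepep : Bf ep ep = 0 := by rw [hepdef, Bf_inv A hA]; exact Bf_epsP_epsP
  have hemem : Bf em em = 0 := by rw [hemdef, Bf_inv A hA]; exact Bf_epsM_epsM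
  simp only [Bf] at hqq hqep hqem hepep hemem
  constructor
  · -- span ⊆ conditions
    intro hM
    refine Submodule.span_induction
      (p := fun X _ => Xᵀ = X ∧
        (∀ ν : Fin 4, q 0 * X 0 ν - q 1 * X 1 ν - q 2 * X 2 ν - q 3 * X 3 ν = 0) ∧
        X 0 0 - X 1 1 - X 2 2 - X 3 3 = 0)
      ?_ ?_ ?_ ?_ hM
    · intro X hX
      simp only [Set.mem_insert_iff, Set.mem_singleton_iff] at hX
      rcases hX with rfl | rfl | rfl | rfl | rfl
      · refine ⟨?_, ?_, ?_⟩
        · ext i j; simp only [Matrix.transpose_apply, Matrix.vecMulVec_apply]; ring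
        · intro ν; simp only [Matrix.vecMulVec_apply]
          linear_combination q ν * hqq
        · simp only [Matrix.vecMulVec_apply]; linear_combination hqq
      · refine ⟨?_, ?_, ?_⟩
        · ext i j
          simp only [Matrix.transpose_apply, Matrix.add_apply, Matrix.vecMulVec_apply]; ring
        · intro ν; simp only [Matrix.add_apply, Matrix.vecMulVec_apply]
          linear_combination ep ν * hqq + q ν * hqep
        · simp only [Matrix.add_apply, Matrix.vecMulVec_apply]
          linear_combination 2 * hqep
      · refine ⟨?_, ?_, ?_⟩
        · ext i j
          simp only [Matrix.transpose_apply, Matrix.add_apply, Matrix.vecMulVec_apply]; ring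
        · intro ν; simp only [Matrix.add_apply, Matrix.vecMulVec_apply]
          linear_combination em ν * hqq + q ν * hqem
        · simp only [Matrix.add_apply, Matrix.vecMulVec_apply]
          linear_combination 2 * hqem
      · refine ⟨?_, ?_, ?_⟩
        · ext i j; simp only [Matrix.transpose_apply, Matrix.vecMulVec_apply]; ring
        · intro ν; simp only [Matrix.vecMulVec_apply]
          linear_combination ep ν * hqep
        · simp only [Matrix.vecMulVec_apply]; linear_combination hepep
      · refine ⟨?_, ?_, ?_⟩
        · ext i j; simp only [Matrix.transpose_apply, Matrix.vecMulVec_apply]; ring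
        · intro ν; simp only [Matrix.vecMulVec_apply]
          linear_combination em ν * hqem
        · simp only [Matrix.vecMulVec_apply]; linear_combination hemem
    · exact ⟨by simp, fun ν => by simp, by simp⟩
    · rintro X Y _ _ ⟨hs1, ht1, hr1⟩ ⟨hs2, ht2, hr2⟩
      refine ⟨by rw [Matrix.transpose_add, hs1, hs2], fun ν => ?_, ?_⟩
      · simp only [Matrix.add_apply]
        linear_combination ht1 ν + ht2 ν
      · simp only [Matrix.add_apply]
        linear_combination hr1 + hr2
    · rintro c X _ ⟨hs1, ht1, hr1⟩
      refine ⟨by rw [Matrix.transpose_smul, hs1], fun ν => ?_, ?_⟩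
      · simp only [Matrix.smul_apply, smul_eq_mul]
        linear_combination c * ht1 ν
      · simp only [Matrix.smul_apply, smul_eq_mul]
        linear_combination c * hr1
  · -- conditions ⊆ span
    rintro ⟨hsym, htrans, htr⟩
    have hAdet : IsUnit A.det := by rw [hA]; exact isUnit_one
    have hAinvdet : A⁻¹.det = 1 := by
      rw [Matrix.det_nonsing_inv, hA, Ring.inverse_one]
    obtain ⟨hLK, hKL⟩ := Lmat_mul A hAdet
    set L : Matrix (Fin 4) (Fin 4) ℂ := Lmat A with hLdef
    set K : Matrix (Fin 4) (Fin 4) ℂ := Lmat A⁻¹ with hKdef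
    have etaA : Lᵀ * etaM * L = etaM := eta_inv A hA
    have etaK : Kᵀ * etaM * K = etaM := eta_inv A⁻¹ hAinvdet
    set N : Matrix (Fin 4) (Fin 4) ℂ := K * M * Kᵀ with hNdef
    have hMN : M = L * N * Lᵀ := by
      rw [hNdef]
      calc M = (L * K) * M * (L * K)ᵀ := by rw [hLK]; simp
        _ = L * (K * M * Kᵀ) * Lᵀ := by
            rw [Matrix.transpose_mul]
            simp only [Matrix.mul_assoc]
    have hNsym : Nᵀ = N := by
      rw [hNdef, Matrix.transpose_mul, Matrix.transpose_mul, Matrix.transpose_transpose,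
        hsym, Matrix.mul_assoc]
    have h1 : etaM * K = Lᵀ * etaM := by
      calc etaM * K = (Lᵀ * etaM * L) * K := by rw [etaA]
        _ = Lᵀ * etaM * (L * K) := by rw [Matrix.mul_assoc]
        _ = Lᵀ * etaM := by rw [hLK, Matrix.mul_one]
    have hwM : (q ᵥ* etaM) ᵥ* M = 0 := by
      funext ν
      rw [vecMul_etaM q]
      show _ = (0 : Fin 4 → ℂ) ν
      rw [vec4_vecMul]
      simp only [Pi.zero_apply]
      linear_combination htrans ν
    have hm : etaM * N = Lᵀ * (etaM * (M * Kᵀ)) := by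
      calc etaM * N = (etaM * K) * (M * Kᵀ) := by rw [hNdef]; simp only [Matrix.mul_assoc]
        _ = (Lᵀ * etaM) * (M * Kᵀ) := by rw [h1]
        _ = Lᵀ * (etaM * (M * Kᵀ)) := by rw [Matrix.mul_assoc]
    have hq0 : L *ᵥ p0C = q := by rw [hLdef, Lmat_mulVec, hqdef]
    have key : (p0C ᵥ* etaM) ᵥ* N = 0 := by
      calc (p0C ᵥ* etaM) ᵥ* N = p0C ᵥ* (etaM * N) := Matrix.vecMul_vecMul _ _ _
        _ = p0C ᵥ* (Lᵀ * (etaM * (M * Kᵀ))) := by rw [hm]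
        _ = (p0C ᵥ* Lᵀ) ᵥ* (etaM * (M * Kᵀ)) := (Matrix.vecMul_vecMul _ _ _).symm
        _ = q ᵥ* (etaM * (M * Kᵀ)) := by rw [Matrix.vecMul_transpose, hq0]
        _ = (q ᵥ* etaM) ᵥ* (M * Kᵀ) := (Matrix.vecMul_vecMul _ _ _).symm
        _ = ((q ᵥ* etaM) ᵥ* M) ᵥ* Kᵀ := (Matrix.vecMul_vecMul _ _ _).symm
        _ = 0 := by rw [hwM, Matrix.zero_vecMul]
    have hNt : ∀ ν : Fin 4, N 0 ν = N 3 ν := by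
      intro ν
      have hx : ((p0C ᵥ* etaM) ᵥ* N) ν = 0 := by rw [key]; rfl
      rw [vecMul_etaM p0C] at hx
      rw [vec4_vecMul] at hx
      have hp0 : p0C 0 = 1 := rfl
      have hp1 : p0C 1 = 0 := rfl
      have hp2 : p0C 2 = 0 := rfl
      have hp3 : p0C 3 = 1 := rfl
      rw [hp0, hp1, hp2, hp3] at hx
      linear_combination hx
    have hNtr : N 0 0 - N 1 1 - N 2 2 - N 3 3 = 0 := by
      have t1 : (etaM * N).trace = (etaM * M).trace := by
        calc (etaM * N).trace = ((etaM * K * M) * Kᵀ).trace := by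
              rw [hNdef]; simp only [Matrix.mul_assoc]
          _ = (Kᵀ * (etaM * K * M)).trace := Matrix.trace_mul_comm _ _
          _ = ((Kᵀ * etaM * K) * M).trace := by simp only [Matrix.mul_assoc]
          _ = (etaM * M).trace := by rw [etaK]
      rw [trace_etaM, trace_etaM] at t1
      linear_combination t1 + htr
    obtain ⟨a1, a2, a3, a4, a5, hdecomp⟩ :
        ∃ a1 a2 a3 a4 a5 : ℂ, N = a1 • vecMulVec p0C p0C
          + a2 • (vecMulVec p0C epsP + vecMulVec epsP p0C)
          + a3 • (vecMulVec p0C epsM + vecMulVec epsM p0C)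
          + a4 • vecMulVec epsP epsP
          + a5 • vecMulVec epsM epsM :=
      ⟨_, _, _, _, _, base_decomp N hNsym hNt hNtr⟩
    have hg : ∀ v w : Fin 4 → ℂ,
        L * vecMulVec v w * Lᵀ = vecMulVec (PhiM A v) (PhiM A w) := by
      intro v w
      rw [mul_vecMulVec_mul, hLdef, Lmat_mulVec, Lmat_mulVec]
    clear_value N L K q ep em
    have hMsum : M = a1 • vecMulVec q q
        + a2 • (vecMulVec q ep + vecMulVec ep q)
        + a3 • (vecMulVec q em + vecMulVec em q)
        + a4 • vecMulVec ep ep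
        + a5 • vecMulVec em em := by
      rw [hMN, hdecomp]
      simp only [Matrix.mul_add, Matrix.add_mul, Matrix.mul_smul, Matrix.smul_mul]
      simp only [hg]
      rw [hqdef, hepdef, hemdef]
    rw [hMsum]
    refine Submodule.add_mem _ (Submodule.add_mem _ (Submodule.add_mem _
      (Submodule.add_mem _ ?_ ?_) ?_) ?_) ?_ <;>
      refine Submodule.smul_mem _ _ (Submodule.subset_span ?_) <;>
      simp only [Set.mem_insert_iff, Set.mem_singleton_iff] <;> tauto
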